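/- Let Φ = P(T−1)P(T−2)⋯P(0) be a product of T row-stochastic n×n matrices, each of the form P(s) = I or P(s) = I + μ_i E_{ij}(e_j−e_i-type averaging) with all diagonal entries of every P(s) at least 1 − μ_max > 0 and at most two off-diagonal entries per matrix. Then Φ ≥ δ_T [P(T−1) + ⋯ + P(0)] entrywise, where δ_T := ((1−μ_max)²/2)^{T−1}. -/

import Mathlib

lemma aux18 (n : ℕ) (μ : ℝ) (hμ0 : 0 < μ) (hμ1 : μ < 1) :
    ∀ (L : List (Matrix (Fin n) (Fin n) ℝ)) (M : Matrix (Fin n) (Fin n) ℝ),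
    (∀ N ∈ M :: L, (∀ i j : Fin n, (0:ℝ) ≤ N i j) ∧ (∀ i j : Fin n, N i j ≤ 1) ∧
      (∀ i : Fin n, 1 - μ ≤ N i i)) →
    ∀ k l : Fin n, ((1 - μ) ^ 2 / 2) ^ (L.length) * (((M :: L).map (fun N => N k l)).sum)
      ≤ ((M :: L).reverse.prod) k l := by
  intro L
  induction L with
  | nil =>
    intro M h k l
    simp
  | cons N L' ih =>
    intro M h k l
    set c : ℝ := (1 - μ) ^ 2 / 2 with hc
    have hμ0' : (0:ℝ) ≤ 1 - μ := by linarith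
    have hc0 : (0:ℝ) ≤ c := by rw [hc]; positivity
    have hc1 : c ≤ 1 - μ := by nlinarith
    have hce : (0:ℝ) ≤ c ^ L'.length := by positivity
    -- IH for the tail list with head N
    have IH := fun k l => ih N (fun A hA => h A (List.mem_cons_of_mem _ hA)) k l
    set Q := ((N :: L').reverse.prod) with hQ
    set S : Fin n → Fin n → ℝ := fun a b => (((N :: L').map (fun A => A a b)).sum) with hS
    have hSnn : ∀ a b, 0 ≤ S a b := by
      intro a b
      apply List.sum_nonneg
      intro x hx
      simp only [List.mem_map] at hx
      obtain ⟨A, hA, rfl⟩ := hx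
      exact (h A (List.mem_cons_of_mem _ hA)).1 a b
    have hSdiag : ∀ a, 1 - μ ≤ S a a := by
      intro a
      have h1 : S a a = N a a + ((L'.map (fun A => A a a)).sum) := by simp [hS]
      have h2 : 0 ≤ (L'.map (fun A => A a a)).sum := by
        apply List.sum_nonneg
        intro x hx
        simp only [List.mem_map] at hx
        obtain ⟨A, hA, rfl⟩ := hx
        exact (h A (List.mem_cons_of_mem _ (List.mem_cons_of_mem _ hA))).1 a a
      have h3 := (h N (List.mem_cons_of_mem _ (List.mem_cons_self))).2.2 a
      linarith
    have hQnn : ∀ a b, 0 ≤ Q a b := fun a b =>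
      le_trans (mul_nonneg hce (hSnn a b)) (IH a b)
    have hM := h M (List.mem_cons_self)
    -- rewrite the product
    have hprod : ((M :: N :: L').reverse.prod) = Q * M := by
      simp [hQ, List.reverse_cons, mul_assoc]
    have hentry : ((M :: N :: L').reverse.prod) k l = ∑ m, Q k m * M m l := by
      rw [hprod, Matrix.mul_apply]
    have hsum : ((M :: N :: L').map (fun A => A k l)).sum = M k l + S k l := by
      simp [hS]
    rw [hentry, hsum]
    have hlen : (N :: L').length = L'.length + 1 := rfl
    rw [hlen, pow_succ]
    by_cases hkl : k = l
    · subst hkl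
      have key : c * (M k k + S k k) ≤ (1 - μ) * S k k := by
        have hM1 : M k k ≤ 1 := hM.2.1 k k
        have := hSdiag k
        nlinarith [hSnn k k]
      have step1 : c ^ L'.length * ((1 - μ) * S k k) ≤ Q k k * M k k := by
        calc c ^ L'.length * ((1 - μ) * S k k) = (c ^ L'.length * S k k) * (1 - μ) := by ring
        _ ≤ Q k k * (1 - μ) := mul_le_mul_of_nonneg_right (IH k k) hμ0'
        _ ≤ Q k k * M k k := mul_le_mul_of_nonneg_left (hM.2.2 k) (hQnn k k)
      have step2 : Q k k * M k k ≤ ∑ m, Q k m * M m k := by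
        apply Finset.single_le_sum (f := fun m => Q k m * M m k)
        · intro m _
          exact mul_nonneg (hQnn k m) (hM.1 m k)
        · exact Finset.mem_univ k
      calc c ^ L'.length * c * (M k k + S k k)
          = c ^ L'.length * (c * (M k k + S k k)) := by ring
        _ ≤ c ^ L'.length * ((1 - μ) * S k k) :=
            mul_le_mul_of_nonneg_left key hce
        _ ≤ Q k k * M k k := step1
        _ ≤ _ := step2
    · -- off-diagonal
      have h1 : c ^ L'.length * c * M k l ≤ Q k k * M k l := by
        have : c ^ L'.length * c ≤ Q k k := by
          calc c ^ L'.length * c ≤ c ^ L'.length * (1 - μ) :=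
              mul_le_mul_of_nonneg_left hc1 hce
          _ ≤ c ^ L'.length * S k k :=
              mul_le_mul_of_nonneg_left (hSdiag k) hce
          _ ≤ Q k k := IH k k
        exact mul_le_mul_of_nonneg_right this (hM.1 k l)
      have h2 : c ^ L'.length * c * S k l ≤ Q k l * M l l := by
        calc c ^ L'.length * c * S k l = (c ^ L'.length * S k l) * c := by ring
          _ ≤ Q k l * c := mul_le_mul_of_nonneg_right (IH k l) hc0
          _ ≤ Q k l * (1 - μ) := mul_le_mul_of_nonneg_left hc1 (hQnn k l)
          _ ≤ Q k l * M l l := mul_le_mul_of_nonneg_left (hM.2.2 l) (hQnn k l)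
      have h3 : Q k k * M k l + Q k l * M l l ≤ ∑ m, Q k m * M m l := by
        have hsub : ({k, l} : Finset (Fin n)) ⊆ Finset.univ := Finset.subset_univ _
        have := Finset.sum_le_sum_of_subset_of_nonneg hsub
          (fun m _ _ => mul_nonneg (hQnn k m) (hM.1 m l))
        rwa [Finset.sum_pair hkl] at this
      linarith [h1, h2, h3]

theorem stmt18 (n T : ℕ) (hn : 2 ≤ n) (hT : 1 ≤ T) (μmax : ℝ)
    (hμmax : μmax ∈ Set.Ioo (0:ℝ) 1)
    (P : Fin T → Matrix (Fin n) (Fin n) ℝ)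
    (hnonneg : ∀ s i j, 0 ≤ P s i j)
    (hrow : ∀ s i, ∑ j, P s i j = 1)
    (hdiag : ∀ s i, 1 - μmax ≤ P s i i)
    (hform : ∀ s, P s = 1 ∨ ∃ i j : Fin n, i ≠ j ∧ ∃ μi μj : ℝ,
      μi ∈ Set.Ioo (0:ℝ) 1 ∧ μj ∈ Set.Ioo (0:ℝ) 1 ∧ μi ≤ μmax ∧ μj ≤ μmax ∧
      P s = 1 + Matrix.of (fun k l =>
        if k = i ∧ l = i then -μi else if k = i ∧ l = j then μi
        else if k = j ∧ l = j then -μj else if k = j ∧ l = i then μj else 0)) :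
    ∀ k l : Fin n,
      ((1 - μmax) ^ 2 / 2) ^ (T - 1) * (∑ s, P s k l)
        ≤ ((List.ofFn P).reverse.prod) k l := by
  obtain ⟨T', rfl⟩ : ∃ T', T = T' + 1 := ⟨T - 1, (Nat.succ_pred_eq_of_pos hT).symm⟩
  intro k l
  have hle : ∀ s (i j : Fin n), P s i j ≤ 1 := fun s i j =>
    le_of_le_of_eq (Finset.single_le_sum (fun m _ => hnonneg s i m) (Finset.mem_univ j))
      (hrow s i)
  have key := aux18 n μmax hμmax.1 hμmax.2
    (List.ofFn (fun i : Fin T' => P i.succ)) (P 0) ?_ k l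
  · have hofn : (P 0 :: List.ofFn (fun i : Fin T' => P i.succ)) = List.ofFn P :=
      List.ofFn_succ.symm
    rw [hofn] at key
    have hlen : (List.ofFn (fun i : Fin T' => P i.succ)).length = T' := by simp
    have hmap : ((List.ofFn P).map (fun N => N k l)).sum = ∑ s, P s k l := by
      rw [List.map_ofFn, List.sum_ofFn]
      rfl
    rw [hlen, hmap] at key
    simpa using key
  · intro A hA
    have hA' : A ∈ List.ofFn P := by rw [List.ofFn_succ]; exact hA
    obtain ⟨s, rfl⟩ := List.mem_ofFn.1 hA'
    exact ⟨hnonneg s, hle s, hdiag s⟩
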